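/- The function S(ξ) = Σ_{j=1}^m ξ_j log ξ_j − Σ_{j=1}^m (1 − ξ_j) log(1 − ξ_j) is convex on the probability simplex { ξ ∈ ℝ^m : ξ_j ≥ 0 for all j, Σ_j ξ_j = 1 }. -/

import Mathlib

open Finset Set

noncomputable def phiV (u : ℝ) : ℝ := u * Real.log u - (1 - u) * Real.log (1 - u)

lemma phiV_continuous : Continuous phiV := by
  unfold phiV
  exact Real.continuous_mul_log.sub
    (Real.continuous_mul_log.comp (continuous_const.sub continuous_id))

lemma phiV_hasDerivAt {u : ℝ} (h0 : 0 < u) (h1 : u < 1) :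
    HasDerivAt phiV (Real.log u + Real.log (1 - u) + 2) u := by
  have h1' : (0:ℝ) < 1 - u := by linarith
  have A := Real.hasDerivAt_mul_log h0.ne'
  have Binner : HasDerivAt (fun v : ℝ => 1 - v) (-1) u := (hasDerivAt_id u).const_sub 1
  have B := (Real.hasDerivAt_mul_log h1'.ne').comp u Binner
  have C := A.sub B
  have : (fun v : ℝ => v * Real.log v - ((fun w : ℝ => w * Real.log w) ∘ fun v => 1 - v) v)
      = phiV := by
    funext v; simp [phiV, Function.comp]
  rw [show ((fun x : ℝ => x * Real.log x) - (fun x => x * Real.log x) ∘ HSub.hSub 1) = phiV from by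
    funext v; simp [phiV, Function.comp]] at C
  exact C.congr_deriv (by ring)

/-- Core quadratic-form inequality (Vontobel). -/
lemma core_ineq {m : ℕ} (u d : Fin m → ℝ) (h0 : ∀ j, 0 ≤ u j)
    (h1 : ∀ j, d j ≠ 0 → 0 < u j ∧ u j < 1)
    (hs : ∑ j, u j = 1) (hd : ∑ j, d j = 0) :
    0 ≤ ∑ j, d j ^ 2 * (1 / u j - 1 / (1 - u j)) := by
  by_cases hbig : ∀ j, d j ≠ 0 → u j ≤ 1 / 2
  · apply Finset.sum_nonneg
    intro j _
    by_cases hdj : d j = 0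
    · simp [hdj]
    · obtain ⟨hu0, hu1⟩ := h1 j hdj
      have hle := hbig j hdj
      have h2 : 1 / (1 - u j) ≤ 1 / u j := by
        rw [div_le_div_iff₀ (by linarith) hu0]; linarith
      exact mul_nonneg (sq_nonneg _) (by linarith)
  · push_neg at hbig
    obtain ⟨j0, hd0, hu0big⟩ := hbig
    obtain ⟨hu00, hu01⟩ := h1 j0 hd0
    set s : Finset (Fin m) := Finset.univ.erase j0 with hs_def
    have hsum_u : ∑ j ∈ s, u j = 1 - u j0 := by
      rw [hs_def, Finset.sum_erase_eq_sub (Finset.mem_univ j0), hs]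
    have hsum_d : ∑ j ∈ s, d j = -(d j0) := by
      rw [hs_def, Finset.sum_erase_eq_sub (Finset.mem_univ j0), hd]; ring
    have hult : ∀ j ∈ s, u j ≤ 1 - u j0 := by
      intro j hj
      rw [← hsum_u]
      exact Finset.single_le_sum (fun i _ => h0 i) hj
    set s' : Finset (Fin m) := s.filter (fun j => d j ≠ 0) with hs'_def
    set G : Fin m → ℝ := fun j => u j * (1 - u j) / (1 - 2 * u j) with hG_def
    have hden : ∀ j ∈ s', 0 < 1 - 2 * u j := by
      intro j hj
      have := hult j (Finset.mem_of_mem_filter j hj)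
      linarith [hu0big]
    have huj : ∀ j ∈ s', 0 < u j ∧ u j < 1 := by
      intro j hj
      exact h1 j (Finset.mem_filter.1 hj).2
    have hGpos : ∀ j ∈ s', 0 < G j := by
      intro j hj
      obtain ⟨a, b⟩ := huj j hj
      exact div_pos (mul_pos a (by linarith)) (hden j hj)
    have hs'd : ∑ j ∈ s', d j = -(d j0) := by
      rw [hs'_def, Finset.sum_filter_ne_zero]
      exact hsum_d
    have hne : s'.Nonempty := by
      by_contra h
      rw [Finset.not_nonempty_iff_eq_empty] at h
      rw [h] at hs'd
      simp at hs'd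
      exact hd0 (by linarith [hs'd])
    have hGsum_pos : 0 < ∑ j ∈ s', G j := Finset.sum_pos hGpos hne
    have hGsum_le : ∑ j ∈ s', G j ≤ u j0 * (1 - u j0) / (2 * u j0 - 1) := by
      have h2 : (0:ℝ) < 2 * u j0 - 1 := by linarith
      have hterm : ∀ j ∈ s', G j ≤ u j * (u j0 / (2 * u j0 - 1)) := by
        intro j hj
        obtain ⟨a, b⟩ := huj j hj
        have hdj := hden j hj
        have hle := hult j (Finset.mem_of_mem_filter j hj)
        have hfrac : (1 - u j) / (1 - 2 * u j) ≤ u j0 / (2 * u j0 - 1) := by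
          rw [div_le_div_iff₀ hdj h2]; nlinarith
        calc G j = u j * ((1 - u j) / (1 - 2 * u j)) := by rw [hG_def]; ring
          _ ≤ u j * (u j0 / (2 * u j0 - 1)) := mul_le_mul_of_nonneg_left hfrac a.le
      calc ∑ j ∈ s', G j ≤ ∑ j ∈ s', u j * (u j0 / (2 * u j0 - 1)) :=
            Finset.sum_le_sum hterm
        _ = (∑ j ∈ s', u j) * (u j0 / (2 * u j0 - 1)) := by
            rw [Finset.sum_mul]
        _ ≤ (1 - u j0) * (u j0 / (2 * u j0 - 1)) := by
            apply mul_le_mul_of_nonneg_right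
            · rw [← hsum_u]
              exact Finset.sum_le_sum_of_subset_of_nonneg (Finset.filter_subset _ _)
                (fun i _ _ => h0 i)
            · exact div_nonneg hu00.le (by linarith)
        _ = u j0 * (1 - u j0) / (2 * u j0 - 1) := by ring
    have hEngel := Finset.sq_sum_div_le_sum_sq_div s' d hGpos
    rw [hs'd] at hEngel
    have hEngel' : d j0 ^ 2 / ∑ j ∈ s', G j ≤ ∑ j ∈ s', d j ^ 2 / G j := by
      simpa using hEngel
    have hchain : d j0 ^ 2 / (u j0 * (1 - u j0) / (2 * u j0 - 1)) ≤ ∑ j ∈ s', d j ^ 2 / G j := by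
      refine le_trans ?_ hEngel'
      exact div_le_div_of_nonneg_left (sq_nonneg _) hGsum_pos hGsum_le
    -- rewrite sums
    have hsum_eq : ∑ j ∈ s, d j ^ 2 * (1 / u j - 1 / (1 - u j)) = ∑ j ∈ s', d j ^ 2 / G j := by
      rw [hs'_def, ← Finset.sum_filter_of_ne (p := fun j => d j ≠ 0)
        (f := fun j => d j ^ 2 * (1 / u j - 1 / (1 - u j)))]
      · apply Finset.sum_congr rfl
        intro j hj
        obtain ⟨a, b⟩ := huj j hj
        have hdj := hden j hj
        have hne1 : u j ≠ 0 := a.ne'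
        have hne2 : (1:ℝ) - u j ≠ 0 := by linarith
        have hne3 : (1:ℝ) - 2 * u j ≠ 0 := hdj.ne'
        rw [hG_def]
        field_simp
        ring_nf
      · intro j _ hne0 hdj
        apply hne0
        simp [hdj]
    have hterm0 : d j0 ^ 2 * (1 / u j0 - 1 / (1 - u j0))
        = -(d j0 ^ 2 / (u j0 * (1 - u j0) / (2 * u j0 - 1))) := by
      have h1' : (0:ℝ) < 1 - u j0 := by linarith
      have h2 : (0:ℝ) < 2 * u j0 - 1 := by linarith
      field_simp
      ring
    rw [← Finset.add_sum_erase Finset.univ _ (Finset.mem_univ j0)]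
    rw [← hs_def, hsum_eq, hterm0]
    linarith

lemma seg_convex {m : ℕ} (x y : Fin m → ℝ)
    (hx0 : ∀ j, 0 ≤ x j) (hx1 : ∀ j, x j ≤ 1) (hxs : ∑ j, x j = 1)
    (hy0 : ∀ j, 0 ≤ y j) (hy1 : ∀ j, y j ≤ 1) (hys : ∑ j, y j = 1) :
    ConvexOn ℝ (Icc (0:ℝ) 1) (fun t => ∑ j, phiV (x j + t * (y j - x j))) := by
  set d : Fin m → ℝ := fun j => y j - x j with hd_def
  have hdsum : ∑ j, d j = 0 := by
    simp [hd_def, Finset.sum_sub_distrib, hxs, hys]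
  have hco : ∀ (t : ℝ), t ∈ Ioo (0:ℝ) 1 → ∀ j, d j ≠ 0 →
      0 < x j + t * d j ∧ x j + t * d j < 1 := by
    intro t ht j hdj
    have hxy : x j ≠ y j := fun h => hdj (by simp [hd_def, h])
    have hd_eq : d j = y j - x j := rfl
    rcases lt_or_gt_of_ne hxy with h | h
    · constructor
      · nlinarith [hx0 j, ht.1, ht.2]
      · nlinarith [hy1 j, ht.1, ht.2]
    · constructor
      · nlinarith [hy0 j, ht.1, ht.2]
      · nlinarith [hx1 j, ht.1, ht.2]
  set g1 : ℝ → ℝ := fun t => ∑ j,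
      (Real.log (x j + t * d j) + Real.log (1 - (x j + t * d j)) + 2) * d j with hg1_def
  set g2 : ℝ → ℝ := fun t => ∑ j,
      d j ^ 2 * (1 / (x j + t * d j) - 1 / (1 - (x j + t * d j))) with hg2_def
  have hinner : ∀ (j : Fin m) (t : ℝ), HasDerivAt (fun t => x j + t * d j) (d j) t := by
    intro j t
    simpa using (hasDerivAt_mul_const (d j)).const_add (x j)
  have hderiv1 : ∀ t ∈ Ioo (0:ℝ) 1,
      HasDerivAt (fun t => ∑ j, phiV (x j + t * d j)) (g1 t) t := by
    intro t ht
    apply HasDerivAt.fun_sum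
    intro j _
    by_cases hdj : d j = 0
    · simp only [hdj, mul_zero, add_zero, zero_mul]
      exact hasDerivAt_const t _
    · obtain ⟨h0, h1⟩ := hco t ht j hdj
      exact (phiV_hasDerivAt h0 h1).comp t (hinner j t)
  have hderiv2 : ∀ t ∈ Ioo (0:ℝ) 1, HasDerivAt g1 (g2 t) t := by
    intro t ht
    apply HasDerivAt.fun_sum
    intro j _
    by_cases hdj : d j = 0
    · simp only [hdj, mul_zero, add_zero, zero_mul, pow_two]
      exact hasDerivAt_const t _
    · obtain ⟨h0, h1⟩ := hco t ht j hdj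
      have h1' : (0:ℝ) < 1 - (x j + t * d j) := by linarith
      have L1 := (Real.hasDerivAt_log h0.ne').comp t (hinner j t)
      have L2inner : HasDerivAt (fun t => 1 - (x j + t * d j)) (-(d j)) t :=
        (hinner j t).const_sub 1
      have L2 := (Real.hasDerivAt_log h1'.ne').comp t L2inner
      have key := ((L1.add L2).add_const 2).mul_const (d j)
      refine key.congr_deriv ?_
      field_simp
      ring
  apply convexOn_of_deriv2_nonneg (convex_Icc 0 1)
  · exact (continuous_finset_sum _ (fun j _ =>
      phiV_continuous.comp (continuous_const.add (continuous_id.mul continuous_const)))).continuousOn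
  · rw [interior_Icc]
    intro t ht
    exact (hderiv1 t ht).differentiableAt.differentiableWithinAt
  · rw [interior_Icc]
    exact DifferentiableOn.congr
      (fun t ht => (hderiv2 t ht).differentiableAt.differentiableWithinAt)
      (fun s hs => (hderiv1 s hs).deriv)
  · rw [interior_Icc]
    intro t ht
    have hit : deriv^[2] (fun t => ∑ j, phiV (x j + t * d j))
        = deriv (deriv (fun t => ∑ j, phiV (x j + t * d j))) := by
      rw [Function.iterate_succ_apply', Function.iterate_one]
    rw [hit]
    have heq : deriv (fun t => ∑ j, phiV (x j + t * d j)) =ᶠ[nhds t] g1 :=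
      Filter.eventuallyEq_of_mem (isOpen_Ioo.mem_nhds ht) (fun s hs => (hderiv1 s hs).deriv)
    rw [heq.deriv_eq, (hderiv2 t ht).deriv]
    apply core_ineq (fun j => x j + t * d j) d
    · intro j
      have h1 := ht.1
      have h2 := ht.2
      have := hx0 j
      have := hy0 j
      have hd_eq : d j = y j - x j := rfl
      nlinarith
    · exact fun j hdj => hco t ht j hdj
    · rw [Finset.sum_add_distrib, ← Finset.mul_sum, hxs, hdsum]
      ring
    · exact hdsum

theorem stmt_2 (m : ℕ) (hm : 1 ≤ m) :
    ConvexOn ℝ {ξ : Fin m → ℝ | (∀ j, 0 ≤ ξ j) ∧ ∑ j, ξ j = 1}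
      (fun ξ => ∑ j, ξ j * Real.log (ξ j)
        - ∑ j, (1 - ξ j) * Real.log (1 - ξ j)) := by
  have hfe : ∀ ξ : Fin m → ℝ,
      (∑ j, ξ j * Real.log (ξ j)) - ∑ j, (1 - ξ j) * Real.log (1 - ξ j)
        = ∑ j, phiV (ξ j) := by
    intro ξ
    rw [← Finset.sum_sub_distrib]
    rfl
  have hle1 : ∀ (z : Fin m → ℝ), z ∈ {ξ : Fin m → ℝ | (∀ j, 0 ≤ ξ j) ∧ ∑ j, ξ j = 1} →
      ∀ j, z j ≤ 1 := by
    rintro z ⟨hz0, hzs⟩ j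
    calc z j ≤ ∑ i, z i := Finset.single_le_sum (fun i _ => hz0 i) (Finset.mem_univ j)
      _ = 1 := hzs
  constructor
  · exact convex_stdSimplex ℝ (Fin m)
  · rintro x hx y hy a b ha hb hab
    have hg := seg_convex x y hx.1 (hle1 x hx) hx.2 hy.1 (hle1 y hy) hy.2
    have h0m : (0:ℝ) ∈ Icc (0:ℝ) 1 := by norm_num
    have h1m : (1:ℝ) ∈ Icc (0:ℝ) 1 := by norm_num
    have key := hg.2 h0m h1m ha hb hab
    simp only [smul_eq_mul, mul_zero, mul_one, zero_add] at key
    have e0 : ∑ j, phiV (x j + 0 * (y j - x j)) = ∑ j, phiV (x j) := by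
      apply Finset.sum_congr rfl; intro j _; norm_num
    have e1 : ∑ j, phiV (x j + 1 * (y j - x j)) = ∑ j, phiV (y j) := by
      apply Finset.sum_congr rfl; intro j _; ring_nf
    have eb : ∑ j, phiV (x j + b * (y j - x j)) = ∑ j, phiV ((a • x + b • y) j) := by
      apply Finset.sum_congr rfl; intro j _
      have : x j + b * (y j - x j) = (a • x + b • y) j := by
        simp only [Pi.add_apply, Pi.smul_apply, smul_eq_mul]
        have : a = 1 - b := by linarith
        rw [this]; ring
      rw [this]
    rw [e0, e1, eb] at key
    simp only [smul_eq_mul]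
    simp only [hfe]
    exact key
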